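/- Let γ ∈ [0,1), let M be a p × m real matrix with MᵀM invertible (full column rank), and let J be an invertible m × m real matrix satisfying ⟨u, J u⟩ ≥ (1 − γ)‖u‖² for all u ∈ ℝᵐ and whose ℓ² operator norm satisfies ‖J‖ ≤ 1 + γ. Let λ₊ and λ₋ denote the maximum and minimum eigenvalues of (MᵀM)⁻¹, and assume the conditioning bound λ₋ > γλ₊ (which holds in particular when the condition number of MᵀM is strictly less than 1/γ). Then for every v ∈ ℝᵐ with M J⁻¹ v ≠ 0, one has ⟨M J⁻¹ v, −M v⟩ < 0; that is, −M v is a descent direction with respect to the gradient M J⁻¹ v. -/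

import Mathlib

open Matrix
open scoped InnerProductSpace


lemma edot {n : ℕ} (x y : Fin n → ℝ) :
    ⟪(WithLp.equiv 2 (Fin n → ℝ)).symm x, (WithLp.equiv 2 (Fin n → ℝ)).symm y⟫_ℝ = x ⬝ᵥ y := by
  rw [EuclideanSpace.inner_eq_star_dotProduct]
  simp [dotProduct, mul_comm]

lemma enorm_sq {n : ℕ} (x : Fin n → ℝ) :
    ‖(WithLp.equiv 2 (Fin n → ℝ)).symm x‖ ^ 2 = x ⬝ᵥ x := by
  rw [← real_inner_self_eq_norm_sq, edot]

lemma enorm_eq {n : ℕ} (x : Fin n → ℝ) :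
    ‖(WithLp.equiv 2 (Fin n → ℝ)).symm x‖ = Real.sqrt (x ⬝ᵥ x) := by
  rw [← enorm_sq, Real.sqrt_sq (norm_nonneg _)]

lemma dot_self_nonneg {n : ℕ} (x : Fin n → ℝ) : 0 ≤ x ⬝ᵥ x := by
  rw [← enorm_sq]; positivity

lemma cs {n : ℕ} (x y : Fin n → ℝ) : |x ⬝ᵥ y| ≤ Real.sqrt ((x ⬝ᵥ x) * (y ⬝ᵥ y)) := by
  rw [← edot, Real.sqrt_mul (dot_self_nonneg x), ← enorm_eq, ← enorm_eq]
  exact abs_real_inner_le_norm _ _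

-- unitary preserves dot product (real case)
lemma udot {n : ℕ} {U : Matrix (Fin n) (Fin n) ℝ} (hU : Uᵀ * U = 1) (z : Fin n → ℝ) :
    (U *ᵥ z) ⬝ᵥ (U *ᵥ z) = z ⬝ᵥ z := by
  rw [Matrix.dotProduct_mulVec, ← Matrix.mulVec_transpose, Matrix.mulVec_mulVec, hU, Matrix.one_mulVec]

lemma star_eq_transpose {n : ℕ} (U : Matrix (Fin n) (Fin n) ℝ) : star U = Uᵀ := rfl

lemma quad_bound {n : ℕ} {B : Matrix (Fin n) (Fin n) ℝ} (hB : B.IsHermitian) (c r : ℝ)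
    (hev : ∀ i, |hB.eigenvalues i - c| ≤ r) (x : Fin n → ℝ) :
    ((B - c • 1) *ᵥ x) ⬝ᵥ ((B - c • 1) *ᵥ x) ≤ r ^ 2 * (x ⬝ᵥ x) := by
  set U : Matrix (Fin n) (Fin n) ℝ := ↑hB.eigenvectorUnitary
  have hU1 : Uᵀ * U = 1 := by
    rw [← star_eq_transpose]
    exact Unitary.coe_star_mul_self hB.eigenvectorUnitary
  have hU2 : U * Uᵀ = 1 := by
    rw [← star_eq_transpose]
    exact Unitary.coe_mul_star_self hB.eigenvectorUnitary
  have hD : B = U * Matrix.diagonal hB.eigenvalues * Uᵀ := by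
    have := hB.spectral_theorem
    rw [← star_eq_transpose]
    convert this using 3
    simp [U]
  have hE : B - c • 1 = U * Matrix.diagonal (fun i => hB.eigenvalues i - c) * Uᵀ := by
    have h2 : Matrix.diagonal (fun i => hB.eigenvalues i - c)
        = Matrix.diagonal hB.eigenvalues - c • 1 := by
      ext i j; by_cases h : i = j <;> simp [h]
    rw [h2, Matrix.mul_sub, Matrix.sub_mul, ← hD, Matrix.mul_smul, Matrix.smul_mul,
      Matrix.mul_one, hU2]
  set y : Fin n → ℝ := Uᵀ *ᵥ x with hy
  have hxy : x ⬝ᵥ x = y ⬝ᵥ y := by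
    rw [hy, ← Matrix.transpose_transpose U] ; rw [udot] ; rwa [Matrix.transpose_transpose]
  have hlhs : ((B - c • 1) *ᵥ x) ⬝ᵥ ((B - c • 1) *ᵥ x)
      = ∑ i, (hB.eigenvalues i - c) ^ 2 * (y i) ^ 2 := by
    rw [hE, ← Matrix.mulVec_mulVec, ← Matrix.mulVec_mulVec, udot hU1]
    simp only [dotProduct, Matrix.mulVec_diagonal, ← hy]
    exact Finset.sum_congr rfl fun i _ => by ring
  rw [hlhs, hxy, dotProduct, Finset.mul_sum]
  apply Finset.sum_le_sum
  intro i _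
  have h1 : (hB.eigenvalues i - c) ^ 2 ≤ r ^ 2 := by
    have := hev i
    nlinarith [abs_nonneg (hB.eigenvalues i - c), sq_abs (hB.eigenvalues i - c)]
  have h2 : (0:ℝ) ≤ (y i) ^ 2 := sq_nonneg _
  calc (hB.eigenvalues i - c) ^ 2 * (y i)^2 ≤ r^2 * (y i)^2 := by nlinarith
    _ = r^2 * (y i * y i) := by ring


/-- **Descent property of Jacobian-free backpropagation.** If `M` has full column rank,
`J` is invertible, `(1−γ)`-coercive and has `ℓ²` operator norm at most `1+γ`
(`γ ∈ [0,1)`), `λ₊, λ₋` are the maximum and minimum eigenvalues of `(MᵀM)⁻¹`, and the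
conditioning bound `λ₋ > γλ₊` holds, then for every `v` with `M J⁻¹ v ≠ 0` one has
`⟪M J⁻¹ v, −M v⟫ < 0`, i.e. `−M v` is a descent direction for the gradient `M J⁻¹ v`. -/
theorem stmt10 {p m : ℕ} (γ : ℝ) (hγ0 : 0 ≤ γ) (hγ1 : γ < 1)
    (M : Matrix (Fin p) (Fin m) ℝ) (hM : IsUnit (Mᵀ * M))
    (J : Matrix (Fin m) (Fin m) ℝ) (hJ : IsUnit J)
    (hJcoer : ∀ u : EuclideanSpace ℝ (Fin m),
      ⟪u, Matrix.toEuclideanCLM (𝕜 := ℝ) J u⟫_ℝ ≥ (1 - γ) * ‖u‖ ^ 2)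
    (hJnorm : ‖Matrix.toEuclideanCLM (𝕜 := ℝ) J‖ ≤ 1 + γ)
    (hH : ((Mᵀ * M)⁻¹).IsHermitian)
    (lp lm : ℝ)
    (hlp : IsGreatest (Set.range hH.eigenvalues) lp)
    (hlm' : IsLeast (Set.range hH.eigenvalues) lm)
    (hcond : lm > γ * lp) :
    ∀ v : EuclideanSpace ℝ (Fin m),
      Matrix.toEuclideanLin (M * J⁻¹) v ≠ 0 →
        ⟪Matrix.toEuclideanLin (M * J⁻¹) v, -(Matrix.toEuclideanLin M v)⟫_ℝ < 0 := by
  intro v hv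
  set v' : Fin m → ℝ := WithLp.equiv 2 (Fin m → ℝ) v with hv'
  set A : Matrix (Fin m) (Fin m) ℝ := Mᵀ * M with hA
  set B : Matrix (Fin m) (Fin m) ℝ := A⁻¹ with hB
  have hdetA : IsUnit A.det := (Matrix.isUnit_iff_isUnit_det A).mp hM
  have hdetJ : IsUnit J.det := (Matrix.isUnit_iff_isUnit_det J).mp hJ
  have hBA : B * A = 1 := Matrix.nonsing_inv_mul A hdetA
  have hJJ : J * J⁻¹ = 1 := Matrix.mul_nonsing_inv J hdetJ
  set u : Fin m → ℝ := J⁻¹ *ᵥ v' with hu'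
  have hvu : v' = J *ᵥ u := by
    rw [hu', Matrix.mulVec_mulVec, hJJ, Matrix.one_mulVec]
  set w : Fin m → ℝ := A *ᵥ u with hw'
  have hBw : B *ᵥ w = u := by
    rw [hw', Matrix.mulVec_mulVec, hBA, Matrix.one_mulVec]
  -- nonvanishing
  have hMu : M *ᵥ u ≠ 0 := by
    intro h
    apply hv
    rw [Matrix.toEuclideanLin_apply]
    change WithLp.toLp 2 ((M * J⁻¹) *ᵥ v') = 0
    rw [← Matrix.mulVec_mulVec, ← hu', h]
    simp
  have hu0 : u ≠ 0 := by
    intro h; exact hMu (by rw [h, Matrix.mulVec_zero])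
  have hw0 : w ≠ 0 := by
    intro h; apply hu0; rw [← hBw, h, Matrix.mulVec_zero]
  set N : ℝ := w ⬝ᵥ w with hN'
  have hN : 0 < N := by
    rcases lt_or_eq_of_le (dot_self_nonneg w) with h | h
    · exact h
    · exfalso; apply hw0
      have : ‖(WithLp.equiv 2 (Fin m → ℝ)).symm w‖ ^ 2 = 0 := by rw [enorm_sq, ← h]
      have h2 : (WithLp.equiv 2 (Fin m → ℝ)).symm w = 0 := by
        rwa [pow_eq_zero_iff (two_ne_zero), norm_eq_zero] at this
      simpa using congrArg (WithLp.equiv 2 (Fin m → ℝ)) h2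
  -- eigenvalue facts
  have hev : ∀ i, lm ≤ hH.eigenvalues i ∧ hH.eigenvalues i ≤ lp := fun i =>
    ⟨hlm'.2 (Set.mem_range_self i), hlp.2 (Set.mem_range_self i)⟩
  have hlmlp : lm ≤ lp := hlm'.2 hlp.1
  have hlp0 : 0 < lp := by nlinarith
  have hlm0 : 0 < lm := by nlinarith
  set c : ℝ := (lp + lm) / 2 with hc'
  set r : ℝ := (lp - lm) / 2 with hr'
  have hc0 : 0 < c := by rw [hc']; linarith
  have hr0 : 0 ≤ r := by rw [hr']; linarith
  -- coercivity in dot form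
  have hcoer : ∀ x : Fin m → ℝ, (1 - γ) * (x ⬝ᵥ x) ≤ x ⬝ᵥ (J *ᵥ x) := by
    intro x
    have h := hJcoer ((WithLp.equiv 2 (Fin m → ℝ)).symm x)
    erw [Matrix.toEuclideanCLM_toLp, edot, enorm_sq] at h
    exact h
  -- operator norm in dot form
  have hop : ∀ x : Fin m → ℝ, (J *ᵥ x) ⬝ᵥ (J *ᵥ x) ≤ (1 + γ) ^ 2 * (x ⬝ᵥ x) := by
    intro x
    have h1 : ‖Matrix.toEuclideanCLM (𝕜 := ℝ) J ((WithLp.equiv 2 (Fin m → ℝ)).symm x)‖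
        ≤ (1 + γ) * ‖(WithLp.equiv 2 (Fin m → ℝ)).symm x‖ :=
      le_trans (ContinuousLinearMap.le_opNorm _ _)
        (mul_le_mul_of_nonneg_right hJnorm (norm_nonneg _))
    erw [Matrix.toEuclideanCLM_toLp] at h1
    have h2 := pow_le_pow_left₀ (norm_nonneg _) h1 2
    erw [enorm_sq, mul_pow, enorm_sq] at h2
    exact h2
  -- E bound
  set E : Matrix (Fin m) (Fin m) ℝ := B - c • 1 with hE'
  have hEbound : (E *ᵥ w) ⬝ᵥ (E *ᵥ w) ≤ r ^ 2 * N := by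
    apply quad_bound hH c r
    intro i
    have h := hev i
    rw [abs_le, hr', hc']
    exact ⟨by linarith [h.1], by linarith [h.2]⟩
  -- decomposition B w = c w + E w
  have hdecomp : B *ᵥ w = c • w + E *ᵥ w := by
    rw [hE', Matrix.sub_mulVec, Matrix.smul_mulVec, Matrix.one_mulVec]
    abel
  -- mixed term bound
  have hmix : -((1 + γ) * r * N) ≤ w ⬝ᵥ (J *ᵥ (E *ᵥ w)) := by
    have h1 : |w ⬝ᵥ (J *ᵥ (E *ᵥ w))| ≤ (1 + γ) * r * N := by
      refine le_trans (cs _ _) ?_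
      have h2 : (J *ᵥ (E *ᵥ w)) ⬝ᵥ (J *ᵥ (E *ᵥ w)) ≤ (1 + γ) ^ 2 * (r ^ 2 * N) :=
        le_trans (hop _) (by nlinarith [hEbound, sq_nonneg (1 + γ)])
      have h3 : N * ((J *ᵥ (E *ᵥ w)) ⬝ᵥ (J *ᵥ (E *ᵥ w))) ≤ ((1 + γ) * r * N) ^ 2 := by
        have := dot_self_nonneg (J *ᵥ (E *ᵥ w))
        nlinarith [hN.le]
      calc Real.sqrt (N * ((J *ᵥ (E *ᵥ w)) ⬝ᵥ (J *ᵥ (E *ᵥ w))))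
          ≤ Real.sqrt (((1 + γ) * r * N) ^ 2) := Real.sqrt_le_sqrt h3
        _ = (1 + γ) * r * N := Real.sqrt_sq (by positivity)
    linarith [neg_abs_le (w ⬝ᵥ (J *ᵥ (E *ᵥ w))), h1]
  -- main positivity
  have hT : 0 < w ⬝ᵥ (J *ᵥ (B *ᵥ w)) := by
    have heq : w ⬝ᵥ (J *ᵥ (B *ᵥ w))
        = c * (w ⬝ᵥ (J *ᵥ w)) + w ⬝ᵥ (J *ᵥ (E *ᵥ w)) := by
      rw [hdecomp, Matrix.mulVec_add, Matrix.mulVec_smul, dotProduct_add,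
        dotProduct_smul]
      rfl
    have h1 := hcoer w
    have hfin : lm - γ * lp = c * (1 - γ) - (1 + γ) * r := by rw [hc', hr']; ring
    rw [heq]
    calc (0:ℝ) < (lm - γ * lp) * N := by
          apply mul_pos; linarith; exact hN
      _ = (c * (1 - γ) - (1 + γ) * r) * N := by rw [hfin]
      _ = c * ((1 - γ) * N) - (1 + γ) * r * N := by ring
      _ ≤ c * (w ⬝ᵥ (J *ᵥ w)) + w ⬝ᵥ (J *ᵥ (E *ᵥ w)) := by
          have := mul_le_mul_of_nonneg_left h1 hc0.le
          linarith [hmix, this]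
  -- rewrite the goal
  have hgoal : ⟪Matrix.toEuclideanLin (M * J⁻¹) v, -(Matrix.toEuclideanLin M v)⟫_ℝ
      = -(w ⬝ᵥ (J *ᵥ (B *ᵥ w))) := by
    rw [inner_neg_right, Matrix.toEuclideanLin_apply, Matrix.toEuclideanLin_apply]
    change -⟪(WithLp.equiv 2 (Fin p → ℝ)).symm ((M * J⁻¹) *ᵥ v'), (WithLp.equiv 2 (Fin p → ℝ)).symm (M *ᵥ v')⟫_ℝ = _
    rw [edot]
    congr 1
    rw [← Matrix.mulVec_mulVec, ← hu']
    rw [Matrix.dotProduct_mulVec (M *ᵥ u) M v', ← Matrix.mulVec_transpose,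
      Matrix.mulVec_mulVec, ← hA, ← hw', hvu, hBw]
  rw [hgoal]
  linarith
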